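/- Let θ̂^{(1)}, …, θ̂^{(B)} be independent and identically distributed random vectors in ℝ^d with θ̂^{(1)} − θ₀ MCH, and set δ = 2^{d−1}·max(0, 2^{−d} − min_{A ∈ O^d} P(θ̂^{(1)} − θ₀ ∈ A)), the orthant median bias of θ̂^{(1)} about θ₀. Then L(B,δ;d) ≤ P(θ₀ ∉ Rect-Hull_B) ≤ U(B,δ;d). -/

import Mathlib

open MeasureTheory ProbabilityTheory

/-- The closed orthant of `ℝ^d` determined by a sign pattern `s : Fin d → Bool`. -/
def orthant {d : ℕ} (s : Fin d → Bool) : Set (Fin d → ℝ) :=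
  {x | ∀ j, if s j then 0 ≤ x j else x j ≤ 0}

/-- `g_j(δ) = (2^j − 1)(2^{−j} − δ 2^{1−j})^B + (2^{−j} + (2^j − 1) δ 2^{1−j})^B`. -/
noncomputable def gfun (B j : ℕ) (δ : ℝ) : ℝ :=
  ((2 : ℝ) ^ j - 1) * (1 / 2 ^ j - δ * (2 / 2 ^ j)) ^ B
    + (1 / 2 ^ j + ((2 : ℝ) ^ j - 1) * δ * (2 / 2 ^ j)) ^ B

/-- `L(B,δ;d) = Σ_{1≤j≤d, j odd} C(d,j) 2^j 2^{−jB} − Σ_{1≤j≤d, j even} C(d,j) g_j(δ)`. -/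
noncomputable def Lfun (B d : ℕ) (δ : ℝ) : ℝ :=
  ∑ j ∈ (Finset.Icc 1 d).filter (fun j => Odd j),
      (d.choose j : ℝ) * 2 ^ j * (1 / 2 ^ j) ^ B
    - ∑ j ∈ (Finset.Icc 1 d).filter (fun j => Even j), (d.choose j : ℝ) * gfun B j δ

/-- `U(B,δ;d) = Σ_{1≤j≤d, j odd} C(d,j) g_j(δ) − Σ_{1≤j≤d, j even} C(d,j) 2^j 2^{−jB}`. -/
noncomputable def Ufun (B d : ℕ) (δ : ℝ) : ℝ :=
  ∑ j ∈ (Finset.Icc 1 d).filter (fun j => Odd j), (d.choose j : ℝ) * gfun B j δ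
    - ∑ j ∈ (Finset.Icc 1 d).filter (fun j => Even j),
        (d.choose j : ℝ) * 2 ^ j * (1 / 2 ^ j) ^ B

/-! ### Auxiliary lemmas -/

/-- Inclusion–exclusion for a probability measure. -/
lemma incl_excl {Ω : Type*} [MeasurableSpace Ω] (P : Measure Ω) [IsProbabilityMeasure P]
    {ι : Type*} [Fintype ι] [DecidableEq ι] (E : ι → Set Ω) (hE : ∀ i, MeasurableSet (E i)) :
    (P (⋃ i, E i)).toReal =
      ∑ T ∈ Finset.univ.powerset.filter (fun T : Finset ι => T.Nonempty),
        (-1 : ℝ) ^ (T.card + 1) * (P (⋂ i ∈ T, E i)).toReal := by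
  classical
  have hmeasInt : ∀ T : Finset ι, MeasurableSet (⋂ i ∈ T, E i) := fun T =>
    MeasurableSet.biInter T.countable_toSet fun i _ => hE i
  have key : ∀ ω : Ω, ((⋃ i, E i).indicator (1 : Ω → ℝ) ω) =
      ∑ T ∈ Finset.univ.powerset.filter (fun T : Finset ι => T.Nonempty),
        (-1 : ℝ) ^ (T.card + 1) * ((⋂ i ∈ T, E i).indicator (1 : Ω → ℝ) ω) := by
    intro ω
    set A : Finset ι := Finset.univ.filter (fun i => ω ∈ E i) with hA
    have hind : ∀ T : Finset ι, ((⋂ i ∈ T, E i).indicator (1 : Ω → ℝ) ω)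
        = if T ⊆ A then 1 else 0 := by
      intro T
      by_cases h : T ⊆ A
      · rw [if_pos h, Set.indicator_of_mem, Pi.one_apply]
        exact Set.mem_iInter₂.2 fun i hi => by
          have := h hi; simp [hA] at this; exact this
      · rw [if_neg h, Set.indicator_of_notMem]
        intro hmem
        exact h fun i hi => by
          simp [hA]; exact Set.mem_iInter₂.1 hmem i hi
    have hfil : (Finset.univ.powerset.filter (fun T : Finset ι => T.Nonempty)).filter
        (fun T => T ⊆ A) = A.powerset.filter (fun T : Finset ι => T.Nonempty) := by
      ext T
      simp only [Finset.mem_filter, Finset.mem_powerset, Finset.subset_univ, true_and]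
      tauto
    have hrhs : ∑ T ∈ Finset.univ.powerset.filter (fun T : Finset ι => T.Nonempty),
        (-1 : ℝ) ^ (T.card + 1) * ((⋂ i ∈ T, E i).indicator (1 : Ω → ℝ) ω)
        = ∑ T ∈ A.powerset.filter (fun T : Finset ι => T.Nonempty),
          (-1 : ℝ) ^ (T.card + 1) := by
      simp_rw [hind, mul_ite, mul_one, mul_zero]
      rw [← Finset.sum_filter, hfil]
    rw [hrhs]
    have h1 : ∑ T ∈ A.powerset, (-1 : ℝ) ^ T.card = if A = ∅ then 1 else 0 := by
      have h := Finset.sum_powerset_neg_one_pow_card (x := A)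
      have : ((∑ T ∈ A.powerset, (-1 : ℤ) ^ T.card : ℤ) : ℝ)
          = ∑ T ∈ A.powerset, (-1 : ℝ) ^ T.card := by push_cast; rfl
      rw [← this, h]
      split_ifs <;> norm_num
    have h2 : A.powerset.filter (fun T : Finset ι => ¬ T.Nonempty) = {∅} := by
      ext T
      simp only [Finset.mem_filter, Finset.mem_powerset, Finset.not_nonempty_iff_eq_empty,
        Finset.mem_singleton]
      constructor
      · exact fun h => h.2
      · rintro rfl; exact ⟨Finset.empty_subset A, rfl⟩
    have h3 : ∑ T ∈ A.powerset.filter (fun T : Finset ι => T.Nonempty),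
        (-1 : ℝ) ^ (T.card + 1)
        = (1 : ℝ) - if A = ∅ then 1 else 0 := by
      have hsum := Finset.sum_filter_add_sum_filter_not A.powerset
        (fun T : Finset ι => T.Nonempty) (fun T => (-1 : ℝ) ^ (T.card + 1))
      have h4 : ∑ T ∈ A.powerset.filter (fun T : Finset ι => ¬ T.Nonempty),
          (-1 : ℝ) ^ (T.card + 1) = -1 := by rw [h2]; simp
      have h5 : ∑ T ∈ A.powerset, (-1 : ℝ) ^ (T.card + 1)
          = - ∑ T ∈ A.powerset, (-1 : ℝ) ^ T.card := by
        rw [← Finset.sum_neg_distrib]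
        exact Finset.sum_congr rfl fun T _ => by ring
      have := hsum
      rw [h4, h5, h1] at this
      linarith
    rw [h3]
    by_cases hAe : A = ∅
    · rw [if_pos hAe]
      have : ω ∉ ⋃ i, E i := by
        intro hmem
        obtain ⟨i, hi⟩ := Set.mem_iUnion.1 hmem
        have : i ∈ A := by simp [hA, hi]
        rw [hAe] at this; exact absurd this (Finset.notMem_empty i)
      rw [Set.indicator_of_notMem this]; norm_num
    · rw [if_neg hAe]
      obtain ⟨i, hi⟩ := Finset.nonempty_iff_ne_empty.2 hAe
      have hiE : ω ∈ E i := by simp [hA] at hi; exact hi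
      rw [Set.indicator_of_mem (Set.mem_iUnion.2 ⟨i, hiE⟩), Pi.one_apply]; norm_num
  have hint : ∀ s : Set Ω, MeasurableSet s → Integrable (s.indicator (1 : Ω → ℝ)) P :=
    fun s hs => (integrable_const (1 : ℝ)).indicator hs
  have hInt : ∫ ω, ((⋃ i, E i).indicator (1 : Ω → ℝ)) ω ∂P
      = ∫ ω, (∑ T ∈ Finset.univ.powerset.filter (fun T : Finset ι => T.Nonempty),
        (-1 : ℝ) ^ (T.card + 1) * ((⋂ i ∈ T, E i).indicator (1 : Ω → ℝ) ω)) ∂P :=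
    integral_congr_ae (Filter.EventuallyEq.of_eq (funext key))
  rw [integral_indicator_one (MeasurableSet.iUnion hE)] at hInt
  rw [← measureReal_def, hInt, integral_finset_sum]
  · exact Finset.sum_congr rfl fun T _ => by
      rw [MeasureTheory.integral_const_mul, integral_indicator_one (hmeasInt T), measureReal_def]
  · exact fun T _ => ((hint _ (hmeasInt T)).const_mul _)

/-- Jensen's inequality and a chord bound for sums of `B`-th powers. -/
lemma sum_pow_bounds {ι : Type*} (s : Finset ι) (q : ι → ℝ) (B j : ℕ) (hB : 1 ≤ B)
    (δ : ℝ) (hδ0 : 0 ≤ δ) (hδ2 : δ ≤ 1/2)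
    (hcard : s.card = 2 ^ j) (hsum : ∑ i ∈ s, q i = 1)
    (hlo : ∀ i ∈ s, 1 / 2 ^ j - δ * (2 / 2 ^ j) ≤ q i) :
    (2 : ℝ) ^ j * (1 / 2 ^ j) ^ B ≤ ∑ i ∈ s, q i ^ B ∧
      ∑ i ∈ s, q i ^ B ≤ ((2 : ℝ) ^ j - 1) * (1 / 2 ^ j - δ * (2 / 2 ^ j)) ^ B
          + (1 / 2 ^ j + ((2 : ℝ) ^ j - 1) * δ * (2 / 2 ^ j)) ^ B := by
  classical
  set m : ℝ := 1 / 2 ^ j - δ * (2 / 2 ^ j) with hm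
  set M : ℝ := 1 / 2 ^ j + ((2 : ℝ) ^ j - 1) * δ * (2 / 2 ^ j) with hM
  have h2j : (0 : ℝ) < 2 ^ j := by positivity
  have h2j1 : (1 : ℝ) ≤ 2 ^ j := one_le_pow₀ (by norm_num)
  have hm0 : 0 ≤ m := by
    rw [hm]
    have h5 : (1/2 : ℝ) * (2 / 2 ^ j) = 1 / 2 ^ j := by ring
    have : δ * (2 / 2 ^ j) ≤ (1/2) * (2 / 2^j) :=
      mul_le_mul_of_nonneg_right hδ2 (by positivity)
    linarith
  have hM0 : 0 ≤ M := by
    rw [hM]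
    have : (0:ℝ) ≤ ((2:ℝ)^j - 1) * δ * (2 / 2 ^ j) :=
      mul_nonneg (mul_nonneg (by linarith) hδ0) (by positivity)
    have : (0:ℝ) < 1 / 2 ^ j := by positivity
    linarith
  have hq0 : ∀ i ∈ s, 0 ≤ q i := fun i hi => le_trans hm0 (hlo i hi)
  have hMm : M - m = 2 * δ := by rw [hM, hm]; field_simp; ring
  have hhi : ∀ i ∈ s, q i ≤ M := by
    intro i hi
    have h1 : ∑ x ∈ s.erase i, q x = 1 - q i := by
      rw [Finset.sum_erase_eq_sub hi, hsum]
    have h2 : (s.erase i).card • m ≤ ∑ x ∈ s.erase i, q x :=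
      Finset.card_nsmul_le_sum _ _ _ (fun x hx => hlo x (Finset.mem_of_mem_erase hx))
    have h3 : (s.erase i).card = 2 ^ j - 1 := by
      rw [Finset.card_erase_of_mem hi, hcard]
    rw [h3, h1] at h2
    have h4 : ((2 ^ j - 1 : ℕ) : ℝ) = (2 : ℝ) ^ j - 1 := by
      push_cast [Nat.cast_sub (Nat.one_le_two_pow)]; norm_num
    rw [nsmul_eq_mul, h4] at h2
    have : ((2:ℝ)^j - 1) * m + M = 1 := by rw [hM, hm]; field_simp; ring
    linarith
  obtain ⟨n, rfl⟩ : ∃ n, B = n + 1 := ⟨B - 1, by omega⟩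
  constructor
  · -- lower bound: Jensen
    have hJ := pow_sum_div_card_le_sum_pow (f := q) (s := s) hq0 n
    rw [hsum, hcard, one_pow] at hJ
    have heq : (2 : ℝ) ^ j * (1 / 2 ^ j) ^ (n + 1) = 1 / ((2:ℝ) ^ j) ^ n := by
      rw [div_pow, one_pow, pow_succ]
      field_simp
    rw [heq]
    calc (1 : ℝ) / ((2:ℝ)^j)^n = 1 / ((2^j : ℕ) : ℝ)^n := by push_cast; ring
      _ ≤ ∑ i ∈ s, q i ^ (n+1) := hJ
  · rcases eq_or_lt_of_le hδ0 with hδeq | hδpos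
    · have hMm0 : M = m := by rw [hM, hm, ← hδeq]; ring
      have hqe : ∀ i ∈ s, q i = m := fun i hi =>
        le_antisymm (hMm0 ▸ hhi i hi) (hlo i hi)
      rw [Finset.sum_congr rfl (fun i hi => by rw [hqe i hi]), Finset.sum_const, hcard,
        nsmul_eq_mul]
      have h4 : ((2 ^ j : ℕ) : ℝ) = (2 : ℝ) ^ j := by push_cast; ring
      rw [h4, hMm0]
      exact le_of_eq (by ring)
    · have hMmpos : 0 < M - m := by rw [hMm]; linarith
      have key : ∀ i ∈ s, q i ^ (n+1) ≤
          ((M - q i) * m ^ (n+1) + (q i - m) * M ^ (n+1)) / (M - m) := by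
        intro i hi
        have ha : 0 ≤ (M - q i) / (M - m) :=
          div_nonneg (by linarith [hhi i hi]) hMmpos.le
        have hb : 0 ≤ (q i - m) / (M - m) :=
          div_nonneg (by linarith [hlo i hi]) hMmpos.le
        have hab : (M - q i) / (M - m) + (q i - m) / (M - m) = 1 := by
          field_simp; ring
        have hconv := (convexOn_pow (𝕜 := ℝ) (n+1)).2 (Set.mem_Ici.2 hm0) (Set.mem_Ici.2 hM0)
          ha hb hab
        simp only [smul_eq_mul] at hconv
        have hcomb : (M - q i) / (M - m) * m + (q i - m) / (M - m) * M = q i := by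
          field_simp; ring
        rw [hcomb] at hconv
        calc q i ^ (n+1) ≤ (M - q i)/(M-m) * m^(n+1) + (q i - m)/(M-m) * M^(n+1) := hconv
          _ = ((M - q i) * m ^ (n+1) + (q i - m) * M ^ (n+1)) / (M - m) := by ring
      calc ∑ i ∈ s, q i ^ (n+1)
          ≤ ∑ i ∈ s, ((M - q i) * m ^ (n+1) + (q i - m) * M ^ (n+1)) / (M - m) :=
            Finset.sum_le_sum key
        _ = (((s.card : ℝ) * M - 1) * m ^ (n+1) + (1 - (s.card : ℝ) * m) * M ^ (n+1)) / (M - m) := by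
            rw [← Finset.sum_div]
            congr 1
            have hterm : ∀ i ∈ s, (M - q i) * m ^ (n+1) + (q i - m) * M ^ (n+1)
                = (M * m^(n+1) - m * M^(n+1)) + q i * (M^(n+1) - m^(n+1)) := fun i _ => by ring
            rw [Finset.sum_congr rfl hterm, Finset.sum_add_distrib, Finset.sum_const,
              ← Finset.sum_mul, hsum, nsmul_eq_mul]
            ring
        _ = ((2:ℝ)^j - 1) * m ^ (n+1) + M ^ (n+1) := by
            rw [hcard]
            have h4 : ((2 ^ j : ℕ) : ℝ) = (2 : ℝ) ^ j := by push_cast; ring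
            rw [h4]
            have e1 : (2:ℝ)^j * M - 1 = ((2:ℝ)^j - 1) * (2*δ) := by
              rw [hM]; field_simp; ring
            have e2 : 1 - (2:ℝ)^j * m = 2*δ := by rw [hm]; field_simp; ring
            rw [e1, e2, hMm]
            field_simp

/-- Partial strict orthant: constraints only on coordinates in `T`. -/
def Cset {d : ℕ} (T : Finset (Fin d)) (ε : Fin d → Bool) : Set (Fin d → ℝ) :=
  {x | ∀ i ∈ T, if ε i then 0 < x i else x i < 0}

/-- Sign patterns supported on `T` (false outside `T`). -/
def patt {d : ℕ} (T : Finset (Fin d)) : Finset (Fin d → Bool) :=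
  Fintype.piFinset (fun i => if i ∈ T then Finset.univ else {false})

lemma mem_patt {d : ℕ} {T : Finset (Fin d)} {ε : Fin d → Bool} :
    ε ∈ patt T ↔ ∀ i ∉ T, ε i = false := by
  simp only [patt, Fintype.mem_piFinset]
  constructor
  · intro h i hi; have := h i; rw [if_neg hi] at this; simpa using this
  · intro h i
    by_cases hi : i ∈ T
    · rw [if_pos hi]; exact Finset.mem_univ _
    · rw [if_neg hi]; simp [h i hi]

lemma card_patt {d : ℕ} (T : Finset (Fin d)) : (patt T).card = 2 ^ T.card := by
  rw [patt, Fintype.card_piFinset]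
  rw [show ∀ (f : Fin d → ℕ), (∀ i, f i = if i ∈ T then 2 else 1) →
      ∏ i, f i = 2 ^ T.card from ?_]
  · intro i
    by_cases hi : i ∈ T <;> simp [hi]
  · intro f hf
    rw [Finset.prod_congr rfl fun i _ => hf i, Finset.prod_ite_mem, Finset.univ_inter,
      Finset.prod_const]

lemma measurableSet_Cset {d : ℕ} (T : Finset (Fin d)) (ε : Fin d → Bool) :
    MeasurableSet (Cset T ε) := by
  have h : Cset T ε = ⋂ i ∈ T, {x : Fin d → ℝ | if ε i then 0 < x i else x i < 0} := by
    ext x; simp [Cset, Set.mem_iInter]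
  rw [h]
  refine MeasurableSet.biInter T.countable_toSet fun i _ => ?_
  cases hb : ε i
  · simp only [hb, if_false, Bool.false_eq_true]
    exact measurableSet_lt (measurable_pi_apply i) measurable_const
  · simp only [hb, if_true]
    exact measurableSet_lt measurable_const (measurable_pi_apply i)

lemma disjoint_Cset {d : ℕ} {T : Finset (Fin d)} {ε ε' : Fin d → Bool}
    (hε : ε ∈ patt T) (hε' : ε' ∈ patt T) (hne : ε ≠ ε') :
    Disjoint (Cset T ε) (Cset T ε') := by
  obtain ⟨i, hi⟩ := Function.ne_iff.1 hne
  have hiT : i ∈ T := by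
    by_contra h
    exact hi ((mem_patt.1 hε i h).trans (mem_patt.1 hε' i h).symm)
  rw [Set.disjoint_left]
  intro x hx hx'
  have h1 := hx i hiT
  have h2 := hx' i hiT
  cases hb : ε i <;> cases hb' : ε' i
  · exact hi (hb.trans hb'.symm)
  · rw [hb] at h1; rw [hb'] at h2; simp at h1 h2; linarith
  · rw [hb] at h1; rw [hb'] at h2; simp at h1 h2; linarith
  · exact hi (hb.trans hb'.symm)

lemma sum_measure_Cset {d : ℕ} (ν : Measure (Fin d → ℝ)) [IsProbabilityMeasure ν]
    (hnull : ν {x | ∃ j, x j = 0} = 0) (T : Finset (Fin d)) :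
    ∑ ε ∈ patt T, (ν (Cset T ε)).toReal = 1 := by
  classical
  have hdisj : (↑(patt T) : Set (Fin d → Bool)).PairwiseDisjoint (fun ε => Cset T ε) :=
    fun ε hε ε' hε' hne => disjoint_Cset (by simpa using hε) (by simpa using hε') hne
  have hsum : ν (⋃ ε ∈ patt T, Cset T ε) = ∑ ε ∈ patt T, ν (Cset T ε) :=
    measure_biUnion_finset hdisj fun ε _ => measurableSet_Cset T ε
  have hcover : Set.univ ⊆ (⋃ ε ∈ patt T, Cset T ε) ∪ {x | ∃ j, x j = 0} := by
    intro x _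
    by_cases hz : ∃ j, x j = 0
    · exact Or.inr hz
    · push_neg at hz
      set ε0 : Fin d → Bool := fun i => if i ∈ T then decide (0 < x i) else false with hε0
      have hε0mem : ε0 ∈ patt T := mem_patt.2 fun i hi => by simp [hε0, hi]
      refine Or.inl (Set.mem_biUnion hε0mem ?_)
      intro i hi
      show (if ε0 i then 0 < x i else x i < 0)
      simp only [hε0]
      rw [if_pos hi]
      rcases lt_or_gt_of_ne (hz i) with h | h
      · rw [decide_eq_false (by linarith : ¬ (0 < x i))]; simpa using h
      · rw [decide_eq_true h]; simpa using h
  have h1 : ν (⋃ ε ∈ patt T, Cset T ε) = 1 := by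
    have hle : (1 : ENNReal) ≤ ν (⋃ ε ∈ patt T, Cset T ε) := by
      calc (1 : ENNReal) = ν Set.univ := (measure_univ).symm
        _ ≤ ν ((⋃ ε ∈ patt T, Cset T ε) ∪ {x | ∃ j, x j = 0}) := measure_mono hcover
        _ ≤ ν (⋃ ε ∈ patt T, Cset T ε) + ν {x | ∃ j, x j = 0} := measure_union_le _ _
        _ = ν (⋃ ε ∈ patt T, Cset T ε) := by rw [hnull, add_zero]
    exact le_antisymm prob_le_one hle
  rw [← ENNReal.toReal_sum (fun ε _ => (measure_lt_top ν _).ne), ← hsum, h1, ENNReal.toReal_one]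

lemma Cset_lower {d : ℕ} (ν : Measure (Fin d → ℝ)) [IsProbabilityMeasure ν]
    (T : Finset (Fin d)) (ε : Fin d → Bool) {c : ℝ}
    (hfull : ∀ s : Fin d → Bool, c ≤ (ν (Cset Finset.univ s)).toReal) :
    (2 : ℝ) ^ (d - T.card) * c ≤ (ν (Cset T ε)).toReal := by
  classical
  set ext : Finset (Fin d → Bool) :=
    Fintype.piFinset (fun i => if i ∈ T then {ε i} else Finset.univ) with hext
  have hcardext : ext.card = 2 ^ (d - T.card) := by
    rw [hext, Fintype.card_piFinset]
    have h1 : ∀ i : Fin d, (if i ∈ T then ({ε i} : Finset Bool) else Finset.univ).card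
        = if i ∈ T then 1 else 2 := by
      intro i; by_cases hi : i ∈ T <;> simp [hi]
    rw [Finset.prod_congr rfl fun i _ => h1 i, Finset.prod_ite, Finset.prod_const,
      Finset.prod_const, one_pow, one_mul]
    congr 1
    rw [Finset.filter_not, Finset.filter_mem_eq_inter, Finset.univ_inter,
      Finset.card_sdiff_of_subset (Finset.subset_univ T), Finset.card_univ, Fintype.card_fin]
  have hsub : ∀ s ∈ ext, Cset Finset.univ s ⊆ Cset T ε := by
    intro s hs x hx i hi
    have hsi : s i = ε i := by
      rw [hext, Fintype.mem_piFinset] at hs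
      have := hs i; rw [if_pos hi] at this; simpa using this
    have := hx i (Finset.mem_univ i)
    rw [hsi] at this; exact this
  have hdisj : (↑ext : Set (Fin d → Bool)).PairwiseDisjoint (fun s => Cset Finset.univ s) :=
    fun s hs s' hs' hne => disjoint_Cset (mem_patt.2 fun i hi => absurd (Finset.mem_univ i) hi.elim)
      (mem_patt.2 fun i hi => absurd (Finset.mem_univ i) hi.elim) hne
  have hsum : ν (⋃ s ∈ ext, Cset Finset.univ s) = ∑ s ∈ ext, ν (Cset Finset.univ s) :=
    measure_biUnion_finset hdisj fun s _ => measurableSet_Cset _ s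
  have hle : ∑ s ∈ ext, ν (Cset Finset.univ s) ≤ ν (Cset T ε) := by
    rw [← hsum]
    exact measure_mono (Set.iUnion₂_subset hsub)
  have hlereal : ∑ s ∈ ext, (ν (Cset Finset.univ s)).toReal ≤ (ν (Cset T ε)).toReal := by
    rw [← ENNReal.toReal_sum (fun s _ => (measure_lt_top ν _).ne)]
    exact ENNReal.toReal_mono (measure_lt_top ν _).ne hle
  calc (2 : ℝ) ^ (d - T.card) * c = (ext.card : ℝ) * c := by rw [hcardext]; push_cast; ring
    _ ≤ ∑ s ∈ ext, (ν (Cset Finset.univ s)).toReal := by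
        rw [← nsmul_eq_mul]
        exact Finset.card_nsmul_le_sum _ _ _ fun s _ => hfull s
    _ ≤ (ν (Cset T ε)).toReal := hlereal

/-- miscoverage bounds for the rectangular hull of `B` i.i.d. MCH estimators. -/
theorem rectHull_miscoverage_bounds
    {Ω : Type*} [MeasurableSpace Ω] (P : Measure Ω) [IsProbabilityMeasure P]
    {d B : ℕ} (hd : 1 ≤ d) (hB : 1 ≤ B)
    (θ : Fin B → Ω → Fin d → ℝ) (θ₀ : Fin d → ℝ)
    (hmeas : ∀ k, Measurable (θ k))
    (hindep : iIndepFun θ P)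
    (hident : ∀ k, Measure.map (θ k) P = Measure.map (θ ⟨0, hB⟩) P)
    (hMCH : P {ω | ∃ j, θ ⟨0, hB⟩ ω j - θ₀ j = 0} = 0)
    (δ : ℝ)
    (hδ : δ = 2 ^ (d - 1) * max 0 (1 / 2 ^ d -
        ⨅ s : Fin d → Bool,
          (P {ω | (fun j => θ ⟨0, hB⟩ ω j - θ₀ j) ∈ orthant s}).toReal)) :
    Lfun B d δ ≤
        (P {ω | ∃ j, (∀ k, θ₀ j < θ k ω j) ∨ (∀ k, θ k ω j < θ₀ j)}).toReal
      ∧ (P {ω | ∃ j, (∀ k, θ₀ j < θ k ω j) ∨ (∀ k, θ k ω j < θ₀ j)}).toReal ≤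
        Ufun B d δ := by
  classical
  set k₀ : Fin B := ⟨0, hB⟩ with hk₀
  set g : (Fin d → ℝ) → (Fin d → ℝ) := fun y j => y j - θ₀ j with hg
  have hgmeas : Measurable g :=
    measurable_pi_lambda _ fun j => (measurable_pi_apply j).sub measurable_const
  set X : Fin B → Ω → (Fin d → ℝ) := fun k ω j => θ k ω j - θ₀ j with hX
  have hXg : ∀ k, X k = g ∘ θ k := fun k => rfl
  have hXmeas : ∀ k, Measurable (X k) := fun k => (hXg k) ▸ (hgmeas.comp (hmeas k))
  set ν : Measure (Fin d → ℝ) := Measure.map (X k₀) P with hν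
  have hνprob : IsProbabilityMeasure ν := Measure.isProbabilityMeasure_map (hXmeas k₀).aemeasurable
  have hmapX : ∀ k, Measure.map (X k) P = ν := by
    intro k
    rw [hν, hXg k, hXg k₀, ← Measure.map_map hgmeas (hmeas k), ← Measure.map_map hgmeas (hmeas k₀),
      hident k]
  -- null set of coordinate zeros
  have hZmeas : MeasurableSet {x : Fin d → ℝ | ∃ j, x j = 0} := by
    have h : {x : Fin d → ℝ | ∃ j, x j = 0} = ⋃ j, (fun x : Fin d → ℝ => x j) ⁻¹' {0} := by
      ext x; simp
    rw [h]
    exact MeasurableSet.iUnion fun j => (measurable_pi_apply j) (measurableSet_singleton 0)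
  have hnull : ν {x | ∃ j, x j = 0} = 0 := by
    rw [hν, Measure.map_apply (hXmeas k₀) hZmeas]
    exact hMCH
  -- orthant facts
  have hOmeas : ∀ s : Fin d → Bool, MeasurableSet (orthant s) := by
    intro s
    have h : orthant s = ⋂ j, {x : Fin d → ℝ | if s j then 0 ≤ x j else x j ≤ 0} := by
      ext x; simp [orthant, Set.mem_iInter]
    rw [h]
    refine MeasurableSet.iInter fun j => ?_
    cases hb : s j
    · simp only [hb, if_false, Bool.false_eq_true]
      exact measurableSet_le (measurable_pi_apply j) measurable_const
    · simp only [hb, if_true]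
      exact measurableSet_le measurable_const (measurable_pi_apply j)
  have hPorth : ∀ s : Fin d → Bool,
      P {ω | (fun j => θ k₀ ω j - θ₀ j) ∈ orthant s} = ν (orthant s) := by
    intro s
    rw [hν, Measure.map_apply (hXmeas k₀) (hOmeas s)]
    rfl
  -- the infimum
  set inf : ℝ := ⨅ s : Fin d → Bool,
      (P {ω | (fun j => θ ⟨0, hB⟩ ω j - θ₀ j) ∈ orthant s}).toReal with hinf
  have hinf_le : ∀ s : Fin d → Bool,
      inf ≤ (P {ω | (fun j => θ ⟨0, hB⟩ ω j - θ₀ j) ∈ orthant s}).toReal := fun s =>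
    ciInf_le (Set.Finite.bddBelow (Set.finite_range _)) s
  have hinf0 : 0 ≤ inf := le_ciInf fun s => ENNReal.toReal_nonneg
  have hδ0 : 0 ≤ δ := by rw [hδ]; positivity
  have h2d1 : (2:ℝ)^d = 2^(d-1) * 2 := by
    rw [← pow_succ]; congr 1; omega
  have hδhalf : δ ≤ 1/2 := by
    rw [hδ]
    have hmax : max 0 (1/2^d - inf) ≤ 1/2^d := max_le (by positivity) (by rw [hinf]; linarith)
    calc (2:ℝ)^(d-1) * max 0 (1/2^d - ⨅ s : Fin d → Bool,
          (P {ω | (fun j => θ ⟨0, hB⟩ ω j - θ₀ j) ∈ orthant s}).toReal)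
        ≤ 2^(d-1) * (1/2^d) := by
          apply mul_le_mul_of_nonneg_left _ (by positivity)
          rw [← hinf] at *; exact hmax
      _ = 1/2 := by rw [h2d1]; field_simp
  -- lower bound on full strict orthants
  have hfull : ∀ s : Fin d → Bool,
      1/2^d - δ * (2/2^d) ≤ (ν (Cset Finset.univ s)).toReal := by
    intro s
    have hsub : orthant s ⊆ Cset Finset.univ s ∪ {x | ∃ j, x j = 0} := by
      intro x hx
      by_cases hz : ∃ j, x j = 0
      · exact Or.inr hz
      · push_neg at hz
        refine Or.inl fun i _ => ?_
        have := hx i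
        cases hb : s i
        · rw [hb] at this
          simp only [Bool.false_eq_true, if_false] at this ⊢
          exact lt_of_le_of_ne this (hz i)
        · rw [hb] at this
          simp only [if_true] at this ⊢
          exact lt_of_le_of_ne this (Ne.symm (hz i))
    have h1 : ν (orthant s) ≤ ν (Cset Finset.univ s) := by
      calc ν (orthant s) ≤ ν (Cset Finset.univ s ∪ {x | ∃ j, x j = 0}) := measure_mono hsub
        _ ≤ ν (Cset Finset.univ s) + ν {x | ∃ j, x j = 0} := measure_union_le _ _
        _ = ν (Cset Finset.univ s) := by rw [hnull, add_zero]
    have h2 : (ν (orthant s)).toReal ≤ (ν (Cset Finset.univ s)).toReal :=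
      ENNReal.toReal_mono (measure_lt_top ν _).ne h1
    have h3 : 1/2^d - inf ≤ δ * (2/2^d) := by
      have hmax : 1/2^d - inf ≤ max 0 (1/2^d - inf) := le_max_right _ _
      have : δ = 2^(d-1) * max 0 (1/2^d - inf) := by rw [hδ, hinf]
      have h4 : δ * (2/2^d) = max 0 (1/2^d - inf) := by
        rw [this, h2d1]
        have h5 : (2:ℝ)^(d-1) ≠ 0 := by positivity
        field_simp
      rw [h4]; exact hmax
    have h5 := hinf_le s
    rw [← hPorth s] at h2
    have : P {ω | (fun j => θ ⟨0, hB⟩ ω j - θ₀ j) ∈ orthant s}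
        = P {ω | (fun j => θ k₀ ω j - θ₀ j) ∈ orthant s} := rfl
    rw [this] at h5
    linarith
  -- the events
  set E : Fin d → Set Ω := fun i => {ω | (∀ k, θ₀ i < θ k ω i) ∨ (∀ k, θ k ω i < θ₀ i)} with hE
  have hEmeas : ∀ i, MeasurableSet (E i) := by
    intro i
    have h1 : {ω | ∀ k, θ₀ i < θ k ω i} = ⋂ k, {ω | θ₀ i < θ k ω i} := by ext; simp
    have h2 : {ω | ∀ k, θ k ω i < θ₀ i} = ⋂ k, {ω | θ k ω i < θ₀ i} := by ext; simp
    have : E i = {ω | ∀ k, θ₀ i < θ k ω i} ∪ {ω | ∀ k, θ k ω i < θ₀ i} := by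
      ext ω; simp [hE]
    rw [this, h1, h2]
    exact (MeasurableSet.iInter fun k =>
        measurableSet_lt measurable_const ((measurable_pi_apply i).comp (hmeas k))).union
      (MeasurableSet.iInter fun k =>
        measurableSet_lt ((measurable_pi_apply i).comp (hmeas k)) measurable_const)
  have hEset : {ω | ∃ j, (∀ k, θ₀ j < θ k ω j) ∨ (∀ k, θ k ω j < θ₀ j)} = ⋃ i, E i := by
    ext ω; simp [hE]
  -- per-T decomposition
  have hTdecomp : ∀ T : Finset (Fin d),
      (P (⋂ i ∈ T, E i)).toReal = ∑ ε ∈ patt T, (ν (Cset T ε)).toReal ^ B := by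
    intro T
    have hseteq : (⋂ i ∈ T, E i) = ⋃ ε ∈ patt T, ⋂ k, (X k) ⁻¹' (Cset T ε) := by
      ext ω
      simp only [Set.mem_iInter, Set.mem_iUnion, Set.mem_preimage]
      constructor
      · intro h
        refine ⟨fun i => if i ∈ T then decide (∀ k, 0 < X k ω i) else false,
          mem_patt.2 (fun i hi => by simp [hi]), ?_⟩
        intro k i hi
        show if (if i ∈ T then decide (∀ k, 0 < X k ω i) else false)
          then 0 < X k ω i else X k ω i < 0
        rw [if_pos hi]
        by_cases hall : ∀ k', 0 < X k' ω i
        · rw [decide_eq_true hall]; simpa using hall k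
        · rw [decide_eq_false hall]
          simp only [Bool.false_eq_true, if_false]
          rcases h i hi with hpos | hneg
          · exact absurd (fun k' => by
              have := hpos k'
              show 0 < X k' ω i
              simp only [hX]
              linarith) hall
          · have := hneg k
            show X k ω i < 0
            simp only [hX]
            linarith
      · rintro ⟨ε, hε, hk⟩ i hi
        cases hb : ε i
        · right; intro k
          have := hk k i hi
          rw [hb] at this
          simp only [Bool.false_eq_true, if_false] at this
          have : θ k ω i - θ₀ i < 0 := this
          linarith
        · left; intro k
          have := hk k i hi
          rw [hb] at this
          simp only [if_true] at this
          have : 0 < θ k ω i - θ₀ i := this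
          linarith
    have hmeasInter : ∀ ε : Fin d → Bool, MeasurableSet (⋂ k, (X k) ⁻¹' (Cset T ε)) :=
      fun ε => MeasurableSet.iInter fun k => (hXmeas k) (measurableSet_Cset T ε)
    have hdisjU : (↑(patt T) : Set (Fin d → Bool)).PairwiseDisjoint
        (fun ε => ⋂ k, (X k) ⁻¹' (Cset T ε)) := by
      intro ε hε ε' hε' hne
      refine Disjoint.mono (Set.iInter_subset _ k₀) (Set.iInter_subset _ k₀) ?_
      exact Disjoint.preimage (X k₀) (disjoint_Cset (by simpa using hε) (by simpa using hε') hne)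
    have hsum : P (⋂ i ∈ T, E i) = ∑ ε ∈ patt T, P (⋂ k, (X k) ⁻¹' (Cset T ε)) := by
      rw [hseteq]
      exact measure_biUnion_finset hdisjU fun ε _ => hmeasInter ε
    have hindep_term : ∀ ε : Fin d → Bool,
        P (⋂ k, (X k) ⁻¹' (Cset T ε)) = ν (Cset T ε) ^ B := by
      intro ε
      have h1 : P (⋂ k, (X k) ⁻¹' (Cset T ε)) = ∏ k : Fin B, P ((X k) ⁻¹' (Cset T ε)) := by
        refine hindep.meas_iInter fun k => ?_
        exact ⟨g ⁻¹' (Cset T ε), hgmeas (measurableSet_Cset T ε), rfl⟩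
      have h2 : ∀ k, P ((X k) ⁻¹' (Cset T ε)) = ν (Cset T ε) := fun k => by
        rw [← hmapX k, Measure.map_apply (hXmeas k) (measurableSet_Cset T ε)]
      rw [h1, Finset.prod_congr rfl (fun k _ => h2 k), Finset.prod_const, Finset.card_univ,
        Fintype.card_fin]
    rw [hsum, Finset.sum_congr rfl (fun ε _ => hindep_term ε),
      ENNReal.toReal_sum (fun ε _ => (by
        exact ENNReal.pow_ne_top (measure_lt_top ν _).ne))]
    exact Finset.sum_congr rfl fun ε _ => ENNReal.toReal_pow _ _
  -- per-T bounds
  have hTbounds : ∀ T : Finset (Fin d),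
      (2:ℝ) ^ T.card * (1 / 2 ^ T.card) ^ B ≤ (P (⋂ i ∈ T, E i)).toReal ∧
        (P (⋂ i ∈ T, E i)).toReal ≤ gfun B T.card δ := by
    intro T
    have hcardle : T.card ≤ d := by simpa using Finset.card_le_univ T
    have hlo : ∀ ε ∈ patt T,
        1 / 2 ^ T.card - δ * (2 / 2 ^ T.card) ≤ (ν (Cset T ε)).toReal := by
      intro ε _
      have hl := Cset_lower ν T ε hfull
      have heq : (2:ℝ)^(d - T.card) * (1/2^d - δ*(2/2^d))
          = 1/2^T.card - δ*(2/2^T.card) := by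
        have h2dd : (2:ℝ)^d = 2^(d - T.card) * 2^T.card := by
          rw [← pow_add]; congr 1; omega
        rw [h2dd]
        have hne1 : ((2:ℝ)^(d - T.card)) ≠ 0 := by positivity
        have hne2 : ((2:ℝ)^T.card) ≠ 0 := by positivity
        field_simp
      rw [heq] at hl
      exact hl
    have := sum_pow_bounds (patt T) (fun ε => (ν (Cset T ε)).toReal) B T.card hB δ hδ0 hδhalf
      (card_patt T) (sum_measure_Cset ν hnull T) hlo
    rw [hTdecomp T]
    exact ⟨this.1, by rw [gfun]; exact this.2⟩
  -- assemble via inclusion-exclusion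
  rw [hEset, incl_excl P E hEmeas]
  have hmaps : ∀ T ∈ Finset.univ.powerset.filter (fun T : Finset (Fin d) => T.Nonempty),
      T.card ∈ Finset.Icc 1 d := by
    intro T hT
    rw [Finset.mem_filter] at hT
    refine Finset.mem_Icc.2 ⟨Finset.one_le_card.2 hT.2, by simpa using Finset.card_le_univ T⟩
  have hgroup : ∑ T ∈ Finset.univ.powerset.filter (fun T : Finset (Fin d) => T.Nonempty),
      (-1 : ℝ) ^ (T.card + 1) * (P (⋂ i ∈ T, E i)).toReal
      = ∑ j ∈ Finset.Icc 1 d,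
          ∑ T ∈ (Finset.univ.powerset.filter (fun T : Finset (Fin d) => T.Nonempty)).filter
            (fun T => T.card = j),
          (-1 : ℝ) ^ (T.card + 1) * (P (⋂ i ∈ T, E i)).toReal :=
    (Finset.sum_fiberwise_of_maps_to hmaps _).symm
  have hfib : ∀ j ∈ Finset.Icc 1 d,
      (Finset.univ.powerset.filter (fun T : Finset (Fin d) => T.Nonempty)).filter
        (fun T => T.card = j) = Finset.powersetCard j Finset.univ := by
    intro j hj
    rw [Finset.mem_Icc] at hj
    ext T
    simp only [Finset.mem_filter, Finset.mem_powerset, Finset.subset_univ, true_and,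
      Finset.mem_powersetCard, Finset.subset_univ]
    constructor
    · exact fun h => h.2
    · intro h
      exact ⟨Finset.one_le_card.1 (h ▸ hj.1), h⟩
  have hjsum : ∀ j ∈ Finset.Icc 1 d,
      ∑ T ∈ Finset.powersetCard j (Finset.univ : Finset (Fin d)),
        (-1 : ℝ) ^ (T.card + 1) * (P (⋂ i ∈ T, E i)).toReal
      = (-1 : ℝ) ^ (j + 1) *
          ∑ T ∈ Finset.powersetCard j (Finset.univ : Finset (Fin d)),
            (P (⋂ i ∈ T, E i)).toReal := by
    intro j _
    rw [Finset.mul_sum]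
    refine Finset.sum_congr rfl fun T hT => ?_
    rw [(Finset.mem_powersetCard.1 hT).2]
  have hgroup2 : ∑ T ∈ Finset.univ.powerset.filter (fun T : Finset (Fin d) => T.Nonempty),
      (-1 : ℝ) ^ (T.card + 1) * (P (⋂ i ∈ T, E i)).toReal
      = ∑ j ∈ Finset.Icc 1 d, (-1 : ℝ) ^ (j + 1) *
          ∑ T ∈ Finset.powersetCard j (Finset.univ : Finset (Fin d)),
            (P (⋂ i ∈ T, E i)).toReal := by
    rw [hgroup]
    exact Finset.sum_congr rfl fun j hj => by rw [hfib j hj, hjsum j hj]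
  rw [hgroup2]
  -- bounds on the fiber sums
  set w : ℕ → ℝ := fun j => ∑ T ∈ Finset.powersetCard j (Finset.univ : Finset (Fin d)),
      (P (⋂ i ∈ T, E i)).toReal with hw
  have hcardPC : ∀ j : ℕ, (Finset.powersetCard j (Finset.univ : Finset (Fin d))).card
      = d.choose j := by
    intro j
    rw [Finset.card_powersetCard, Finset.card_univ, Fintype.card_fin]
  have hwlo : ∀ j : ℕ, (d.choose j : ℝ) * (2 ^ j * (1 / 2 ^ j) ^ B) ≤ w j := by
    intro j
    rw [hw, ← hcardPC j, ← nsmul_eq_mul]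
    refine Finset.card_nsmul_le_sum _ _ _ fun T hT => ?_
    have hc := (Finset.mem_powersetCard.1 hT).2
    have := (hTbounds T).1
    rw [hc] at this
    exact this
  have hwhi : ∀ j : ℕ, w j ≤ (d.choose j : ℝ) * gfun B j δ := by
    intro j
    rw [hw, ← hcardPC j, ← nsmul_eq_mul]
    refine Finset.sum_le_card_nsmul _ _ _ fun T hT => ?_
    have hc := (Finset.mem_powersetCard.1 hT).2
    have := (hTbounds T).2
    rw [hc] at this
    exact this
  have hw0 : ∀ j : ℕ, 0 ≤ w j := fun j =>
    Finset.sum_nonneg fun T _ => ENNReal.toReal_nonneg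
  -- split by parity
  have hsplit : ∑ j ∈ Finset.Icc 1 d, (-1 : ℝ) ^ (j + 1) * w j
      = (∑ j ∈ (Finset.Icc 1 d).filter (fun j => Odd j), w j)
        - ∑ j ∈ (Finset.Icc 1 d).filter (fun j => Even j), w j := by
    rw [← Finset.sum_filter_add_sum_filter_not (Finset.Icc 1 d) (fun j => Odd j)]
    have hodd : ∑ j ∈ (Finset.Icc 1 d).filter (fun j => Odd j), (-1 : ℝ) ^ (j + 1) * w j
        = ∑ j ∈ (Finset.Icc 1 d).filter (fun j => Odd j), w j := by
      refine Finset.sum_congr rfl fun j hj => ?_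
      have hoj : Odd j := (Finset.mem_filter.1 hj).2
      rw [Even.neg_one_pow (by exact hoj.add_one), one_mul]
    have heven : ∑ j ∈ (Finset.Icc 1 d).filter (fun j => ¬ Odd j), (-1 : ℝ) ^ (j + 1) * w j
        = - ∑ j ∈ (Finset.Icc 1 d).filter (fun j => Even j), w j := by
      rw [Finset.filter_congr (fun j _ => by rw [Nat.not_odd_iff_even] :
        ∀ j ∈ Finset.Icc 1 d, (¬ Odd j ↔ Even j))]
      rw [← Finset.sum_neg_distrib]
      refine Finset.sum_congr rfl fun j hj => ?_
      have hej : Even j := (Finset.mem_filter.1 hj).2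
      rw [Odd.neg_one_pow (by exact hej.add_one), neg_one_mul]
    rw [hodd, heven]
    ring
  rw [hsplit]
  constructor
  · -- lower bound
    rw [Lfun]
    have h1 : ∑ j ∈ (Finset.Icc 1 d).filter (fun j => Odd j),
        (d.choose j : ℝ) * 2 ^ j * (1 / 2 ^ j) ^ B
        ≤ ∑ j ∈ (Finset.Icc 1 d).filter (fun j => Odd j), w j := by
      refine Finset.sum_le_sum fun j _ => ?_
      have := hwlo j
      linarith [this, (by ring : (d.choose j : ℝ) * 2 ^ j * (1 / 2 ^ j) ^ B
        = (d.choose j : ℝ) * (2 ^ j * (1 / 2 ^ j) ^ B))]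
    have h2 : ∑ j ∈ (Finset.Icc 1 d).filter (fun j => Even j), w j
        ≤ ∑ j ∈ (Finset.Icc 1 d).filter (fun j => Even j), (d.choose j : ℝ) * gfun B j δ :=
      Finset.sum_le_sum fun j _ => hwhi j
    linarith
  · -- upper bound
    rw [Ufun]
    have h1 : ∑ j ∈ (Finset.Icc 1 d).filter (fun j => Odd j), w j
        ≤ ∑ j ∈ (Finset.Icc 1 d).filter (fun j => Odd j), (d.choose j : ℝ) * gfun B j δ :=
      Finset.sum_le_sum fun j _ => hwhi j
    have h2 : ∑ j ∈ (Finset.Icc 1 d).filter (fun j => Even j),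
        (d.choose j : ℝ) * 2 ^ j * (1 / 2 ^ j) ^ B
        ≤ ∑ j ∈ (Finset.Icc 1 d).filter (fun j => Even j), w j := by
      refine Finset.sum_le_sum fun j _ => ?_
      have := hwlo j
      linarith [this, (by ring : (d.choose j : ℝ) * 2 ^ j * (1 / 2 ^ j) ^ B
        = (d.choose j : ℝ) * (2 ^ j * (1 / 2 ^ j) ^ B))]
    linarith
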